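/- Let (Ω, 𝔄, P) be a probability space, θ a real-valued random variable with symmetric law (law of −θ equals law of θ) and finite moments of all orders, ε independent of θ with finite moments of all orders, and z = θ² + ε. Fix n ∈ ℕ and assume the Hankel moment matrix M_{ℓk} = E[z^{ℓ+k}] (0 ≤ ℓ, k ≤ n) is invertible. Then the unique coefficient vector (a₀, …, aₙ) minimizing E[(θ − Σ_{k=0}^{n} a_k z^k)²] is the zero vector; i.e., the best polynomial predictor of θ from z of any degree n is identically zero. -/

import Mathlib

open MeasureTheory ProbabilityTheory

/-- For the measurement `z = θ² + ε` (with `θ` symmetrically distributed with all moments,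
`ε` independent of `θ` with all moments), if the Hankel moment matrix
`M_{ℓk} = E[z^{ℓ+k}]`, `0 ≤ ℓ, k ≤ n`, is invertible, then the unique coefficient vector
minimizing `E[(θ - Σₖ aₖ zᵏ)²]` is zero: the best polynomial predictor of `θ` from `z`
of any degree `n` is identically zero. -/
theorem stmt12 {Ω : Type*} [MeasurableSpace Ω] (μ : Measure Ω) [IsProbabilityMeasure μ]
    (θ ε : Ω → ℝ) (hθmeas : Measurable θ) (hεmeas : Measurable ε)
    (hsym : Measure.map (fun ω => -θ ω) μ = Measure.map θ μ)
    (hθmom : ∀ p : ℕ, Integrable (fun ω => θ ω ^ p) μ)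
    (hεmom : ∀ p : ℕ, Integrable (fun ω => ε ω ^ p) μ)
    (hindep : IndepFun θ ε μ)
    (n : ℕ) (M : Matrix (Fin (n + 1)) (Fin (n + 1)) ℝ)
    (hM : ∀ l k : Fin (n + 1), M l k = ∫ ω, (θ ω ^ 2 + ε ω) ^ ((l : ℕ) + (k : ℕ)) ∂μ)
    (hMinv : IsUnit M.det) :
    (∀ b : Fin (n + 1) → ℝ,
        ∫ ω, (θ ω - ∑ k : Fin (n + 1), (0 : ℝ) * (θ ω ^ 2 + ε ω) ^ (k : ℕ)) ^ 2 ∂μ ≤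
          ∫ ω, (θ ω - ∑ k : Fin (n + 1), b k * (θ ω ^ 2 + ε ω) ^ (k : ℕ)) ^ 2 ∂μ) ∧
      ∀ a : Fin (n + 1) → ℝ,
        (∀ b : Fin (n + 1) → ℝ,
            ∫ ω, (θ ω - ∑ k : Fin (n + 1), a k * (θ ω ^ 2 + ε ω) ^ (k : ℕ)) ^ 2 ∂μ ≤
              ∫ ω, (θ ω - ∑ k : Fin (n + 1), b k * (θ ω ^ 2 + ε ω) ^ (k : ℕ)) ^ 2 ∂μ) →
          a = 0 := by
  -- abbreviation for the measurement
  set z : Ω → ℝ := fun ω => θ ω ^ 2 + ε ω with hzdef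
  have hzω : ∀ ω, θ ω ^ 2 + ε ω = z ω := fun _ => rfl
  simp only [hzω] at hM ⊢
  -- products of powers of θ and ε
  have hprodI : ∀ m l : ℕ, Integrable (fun ω => θ ω ^ m * ε ω ^ l) μ := fun m l =>
    (hindep.comp (measurable_id.pow_const m) (measurable_id.pow_const l)).integrable_mul
      (hθmom m) (hεmom l)
  have hprodE : ∀ m l : ℕ, ∫ ω, θ ω ^ m * ε ω ^ l ∂μ
      = (∫ ω, θ ω ^ m ∂μ) * (∫ ω, ε ω ^ l ∂μ) := fun m l =>
    (hindep.comp (measurable_id.pow_const m) (measurable_id.pow_const l)).integral_fun_mul_eq_mul_integral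
      (hθmom m).aestronglyMeasurable (hεmom l).aestronglyMeasurable
  -- odd moments of θ vanish
  have hodd : ∀ j : ℕ, ∫ ω, θ ω ^ (2 * j + 1) ∂μ = 0 := by
    intro j
    have h1 : ∫ ω, θ ω ^ (2 * j + 1) ∂μ = ∫ x, x ^ (2 * j + 1) ∂(Measure.map θ μ) :=
      (integral_map hθmeas.aemeasurable ((measurable_id.pow_const _).aestronglyMeasurable)).symm
    have h2 : ∫ x, x ^ (2 * j + 1) ∂(Measure.map (fun ω => -θ ω) μ)
        = ∫ ω, (-θ ω) ^ (2 * j + 1) ∂μ :=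
      integral_map (hθmeas.neg).aemeasurable ((measurable_id.pow_const _).aestronglyMeasurable)
    have h3 : ∀ ω, (-θ ω) ^ (2 * j + 1) = -(θ ω ^ (2 * j + 1)) := fun ω =>
      (odd_two_mul_add_one j).neg_pow _
    rw [hsym, h1.symm] at h2
    simp only [h3] at h2
    rw [integral_neg] at h2
    linarith
  -- expansion of z ^ p
  have hzp : ∀ (p : ℕ) (ω : Ω), z ω ^ p = ∑ j ∈ Finset.range (p + 1),
      θ ω ^ (2 * j) * ε ω ^ (p - j) * (p.choose j : ℝ) := by
    intro p ω
    rw [hzdef]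
    show (θ ω ^ 2 + ε ω) ^ p = _
    rw [add_pow]
    exact Finset.sum_congr rfl fun j _ => by rw [← pow_mul]
  have hθzp : ∀ (p : ℕ) (ω : Ω), θ ω * z ω ^ p = ∑ j ∈ Finset.range (p + 1),
      θ ω ^ (2 * j + 1) * ε ω ^ (p - j) * (p.choose j : ℝ) := by
    intro p ω
    rw [hzp, Finset.mul_sum]
    exact Finset.sum_congr rfl fun j _ => by ring
  -- integrability of z^p and θ·z^p
  have hzint : ∀ p : ℕ, Integrable (fun ω => z ω ^ p) μ := by
    intro p
    simp only [hzp]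
    exact integrable_finset_sum _ fun j _ => (hprodI (2 * j) (p - j)).mul_const _
  have hθzint : ∀ p : ℕ, Integrable (fun ω => θ ω * z ω ^ p) μ := by
    intro p
    simp only [hθzp]
    exact integrable_finset_sum _ fun j _ => (hprodI (2 * j + 1) (p - j)).mul_const _
  -- the mixed moments vanish
  have hθz0 : ∀ p : ℕ, ∫ ω, θ ω * z ω ^ p ∂μ = 0 := by
    intro p
    simp only [hθzp]
    rw [integral_finset_sum _ fun j _ => (hprodI (2 * j + 1) (p - j)).mul_const _]
    refine Finset.sum_eq_zero fun j _ => ?_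
    rw [integral_mul_const, hprodE, hodd j, zero_mul, zero_mul]
  -- integrability of the predictor pieces
  have hSsq : ∀ b : Fin (n + 1) → ℝ, ∀ ω,
      (∑ k : Fin (n + 1), b k * z ω ^ (k : ℕ)) ^ 2
        = ∑ k : Fin (n + 1), ∑ j : Fin (n + 1), b k * b j * z ω ^ ((k : ℕ) + (j : ℕ)) := by
    intro b ω
    rw [sq, Finset.sum_mul_sum]
    exact Finset.sum_congr rfl fun k _ => Finset.sum_congr rfl fun j _ => by
      rw [pow_add]; ring
  have hSsqint : ∀ b : Fin (n + 1) → ℝ,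
      Integrable (fun ω => (∑ k : Fin (n + 1), b k * z ω ^ (k : ℕ)) ^ 2) μ := by
    intro b
    simp only [hSsq]
    exact integrable_finset_sum _ fun k _ =>
      integrable_finset_sum _ fun j _ => (hzint _).const_mul _
  have hθSint : ∀ b : Fin (n + 1) → ℝ,
      Integrable (fun ω => θ ω * ∑ k : Fin (n + 1), b k * z ω ^ (k : ℕ)) μ := by
    intro b
    have : ∀ ω, θ ω * ∑ k : Fin (n + 1), b k * z ω ^ (k : ℕ)
        = ∑ k : Fin (n + 1), b k * (θ ω * z ω ^ (k : ℕ)) := by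
      intro ω; rw [Finset.mul_sum]; exact Finset.sum_congr rfl fun k _ => by ring
    simp only [this]
    exact integrable_finset_sum _ fun k _ => (hθzint _).const_mul _
  have hθS0 : ∀ b : Fin (n + 1) → ℝ,
      ∫ ω, θ ω * ∑ k : Fin (n + 1), b k * z ω ^ (k : ℕ) ∂μ = 0 := by
    intro b
    have : ∀ ω, θ ω * ∑ k : Fin (n + 1), b k * z ω ^ (k : ℕ)
        = ∑ k : Fin (n + 1), b k * (θ ω * z ω ^ (k : ℕ)) := by
      intro ω; rw [Finset.mul_sum]; exact Finset.sum_congr rfl fun k _ => by ring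
    simp only [this]
    rw [integral_finset_sum _ fun k _ => (hθzint _).const_mul _]
    exact Finset.sum_eq_zero fun k _ => by rw [integral_const_mul, hθz0, mul_zero]
  -- value of ∫ S_b²
  have hQeq : ∀ b : Fin (n + 1) → ℝ,
      ∫ ω, (∑ k : Fin (n + 1), b k * z ω ^ (k : ℕ)) ^ 2 ∂μ
        = ∑ k : Fin (n + 1), ∑ j : Fin (n + 1), b k * b j * M k j := by
    intro b
    simp only [hSsq]
    rw [integral_finset_sum _ fun k _ =>
      integrable_finset_sum _ fun j _ => (hzint _).const_mul _]
    refine Finset.sum_congr rfl fun k _ => ?_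
    rw [integral_finset_sum _ fun j _ => (hzint _).const_mul _]
    exact Finset.sum_congr rfl fun j _ => by rw [integral_const_mul, hM]
  -- the key identity
  have hkey : ∀ b : Fin (n + 1) → ℝ,
      ∫ ω, (θ ω - ∑ k : Fin (n + 1), b k * z ω ^ (k : ℕ)) ^ 2 ∂μ
        = (∫ ω, θ ω ^ 2 ∂μ)
          + ∑ k : Fin (n + 1), ∑ j : Fin (n + 1), b k * b j * M k j := by
    intro b
    have hpt : ∀ ω, (θ ω - ∑ k : Fin (n + 1), b k * z ω ^ (k : ℕ)) ^ 2
        = θ ω ^ 2 - 2 * (θ ω * ∑ k : Fin (n + 1), b k * z ω ^ (k : ℕ))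
          + (∑ k : Fin (n + 1), b k * z ω ^ (k : ℕ)) ^ 2 := fun ω => by ring
    simp only [hpt]
    have hint1 : Integrable
        (fun ω => θ ω ^ 2 - 2 * (θ ω * ∑ k : Fin (n + 1), b k * z ω ^ (k : ℕ))) μ :=
      (hθmom 2).sub ((hθSint b).const_mul 2)
    rw [integral_add hint1 (hSsqint b)]
    rw [integral_sub (hθmom 2) ((hθSint b).const_mul 2), integral_const_mul, hθS0, mul_zero,
      sub_zero, hQeq]
  have hQnonneg : ∀ b : Fin (n + 1) → ℝ,
      0 ≤ ∑ k : Fin (n + 1), ∑ j : Fin (n + 1), b k * b j * M k j := by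
    intro b
    rw [← hQeq]
    exact integral_nonneg fun ω => sq_nonneg _
  constructor
  · intro b
    have h0 : ∫ ω, (θ ω - ∑ k : Fin (n + 1), (0 : ℝ) * z ω ^ (k : ℕ)) ^ 2 ∂μ
        = ∫ ω, θ ω ^ 2 ∂μ := by
      simp only [zero_mul, Finset.sum_const_zero, sub_zero]
    rw [h0, hkey b]
    linarith [hQnonneg b]
  · intro a ha
    have h0 := ha 0
    simp only [Pi.zero_apply, zero_mul, Finset.sum_const_zero, sub_zero] at h0
    rw [hkey a] at h0
    have hQa : ∑ k : Fin (n + 1), ∑ j : Fin (n + 1), a k * a j * M k j = 0 :=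
      le_antisymm (by linarith) (hQnonneg a)
    -- S_a = 0 a.e.
    have hSa0 : (fun ω => ∑ k : Fin (n + 1), a k * z ω ^ (k : ℕ)) =ᵐ[μ] 0 := by
      have hint := hSsqint a
      have h2 : ∫ ω, (∑ k : Fin (n + 1), a k * z ω ^ (k : ℕ)) ^ 2 ∂μ = 0 := by
        rw [hQeq]; exact hQa
      have h3 := (integral_eq_zero_iff_of_nonneg (fun ω => sq_nonneg _) hint).mp h2
      filter_upwards [h3] with ω hω
      simp only [Pi.zero_apply] at hω ⊢
      exact pow_eq_zero_iff two_ne_zero |>.mp hω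
    -- M ⬝ᵥ a = 0
    have hMa : M.mulVec a = 0 := by
      funext l
      show ∑ k, M l k * a k = 0
      have hexp : ∀ ω, z ω ^ (l : ℕ) * (∑ k : Fin (n + 1), a k * z ω ^ (k : ℕ))
          = ∑ k : Fin (n + 1), a k * z ω ^ ((l : ℕ) + (k : ℕ)) := by
        intro ω
        rw [Finset.mul_sum]
        exact Finset.sum_congr rfl fun k _ => by rw [pow_add]; ring
      have h1 : ∫ ω, ∑ k : Fin (n + 1), a k * z ω ^ ((l : ℕ) + (k : ℕ)) ∂μ = 0 := by
        simp only [← hexp]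
        have : (fun ω => z ω ^ (l : ℕ) * ∑ k : Fin (n + 1), a k * z ω ^ (k : ℕ)) =ᵐ[μ] 0 := by
          filter_upwards [hSa0] with ω hω
          simp [hω]
        rw [integral_congr_ae this]; simp
      rw [integral_finset_sum _ fun k _ => (hzint _).const_mul _] at h1
      calc ∑ k, M l k * a k = ∑ k : Fin (n + 1), ∫ ω, a k * z ω ^ ((l : ℕ) + (k : ℕ)) ∂μ := by
            refine Finset.sum_congr rfl fun k _ => ?_
            rw [integral_const_mul, hM, mul_comm]
        _ = 0 := h1
    -- conclude from invertibility
    have hM1 : M⁻¹ * M = 1 := Matrix.nonsing_inv_mul M hMinv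
    calc a = (1 : Matrix (Fin (n+1)) (Fin (n+1)) ℝ).mulVec a := (Matrix.one_mulVec a).symm
      _ = M⁻¹.mulVec (M.mulVec a) := by rw [Matrix.mulVec_mulVec, hM1]
      _ = 0 := by rw [hMa, Matrix.mulVec_zero]
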